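/- Let R be a commutative self FP-injective ring. If R is coherent, then R is semicoherent. -/

import Mathlib

universe u

open CategoryTheory

/-- A commutative ring is *coherent* if every finitely generated ideal is finitely presented. -/
def IsCoherentRing (R : Type u) [CommRing R] : Prop :=
  ∀ I : Ideal R, I.FG → Module.FinitePresentation R I

/-- A commutative ring is *semicoherent* if for every pair of injective modules `E, F`,
the module `Hom_R(E, F)` is isomorphic to a submodule of a flat module. -/
def IsSemicoherentRing (R : Type u) [CommRing R] : Prop :=
  ∀ E F : ModuleCat.{u} R, Module.Injective R E → Module.Injective R F →
    ∃ (M : ModuleCat.{u} R) (f : (E →ₗ[R] F) →ₗ[R] M),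
      Module.Flat R M ∧ Function.Injective f

/-- A module `M` is *FP-injective* if `Ext¹_R(F, M) = 0` for every finitely presented
module `F`. -/
def IsFPInjective (R : Type u) [CommRing R] (M : Type u) [AddCommGroup M] [Module R M] : Prop :=
  ∀ F : ModuleCat.{u} R, Module.FinitePresentation R F →
    Subsingleton (((Ext R (ModuleCat.{u} R) 1).obj (Opposite.op F)).obj (ModuleCat.of R M))

/-- A commutative ring is an *IF-ring* if every injective module over it is flat. -/
def IsIFRing (R : Type u) [CommRing R] : Prop :=
  ∀ M : ModuleCat.{u} R, Module.Injective R M → Module.Flat R M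

/-- `f : M →ₗ[R] E` exhibits `E` as an injective hull (injective envelope) of `M`:
`E` is injective and `f` is an essential monomorphism. -/
def IsInjectiveHull (R : Type u) [CommRing R] (M : Type u) [AddCommGroup M] [Module R M]
    (E : Type u) [AddCommGroup E] [Module R E] (f : M →ₗ[R] E) : Prop :=
  Module.Injective R E ∧ Function.Injective f ∧
    ∀ N : Submodule R E, N ≠ ⊥ → N ⊓ LinearMap.range f ≠ ⊥

/-- A submodule is indecomposable if it is nonzero and is not the direct sum of two
nonzero submodules. -/
def IsIndecomposableSubmodule {R : Type u} [CommRing R] {M : Type u} [AddCommGroup M]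
    [Module R M] (N : Submodule R M) : Prop :=
  N ≠ ⊥ ∧ ∀ A B : Submodule R M, A ≤ N → B ≤ N → A ⊓ B = ⊥ → A ⊔ B = N → A = ⊥ ∨ B = ⊥

/-- A module has *finite Goldie dimension* if its injective hull is a finite direct sum
of indecomposable injective modules. -/
def HasFiniteGoldieDimension (R : Type u) [CommRing R] (M : Type u) [AddCommGroup M]
    [Module R M] : Prop :=
  ∃ (E : ModuleCat.{u} R) (f : M →ₗ[R] E) (n : ℕ) (N : Fin n → Submodule R E),
    IsInjectiveHull R M E f ∧ iSupIndep N ∧ (⨆ i, N i) = ⊤ ∧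
      ∀ i, IsIndecomposableSubmodule (N i) ∧ Module.Injective R (N i)

/-- A commutative ring is *arithmetical* if all its localizations at maximal ideals are
valuation rings, i.e. have totally ordered lattices of ideals. -/
def IsArithmeticalRing (R : Type u) [CommRing R] : Prop :=
  ∀ (P : Ideal R) [P.IsMaximal],
    ∀ I J : Ideal (Localization.AtPrime P), I ≤ J ∨ J ≤ I

/-- A module `M` is *finitely injective* if every homomorphism from a finitely generated
submodule `A` of an arbitrary module `B` into `M` extends to `B`. -/
def IsFinitelyInjective (R : Type u) [CommRing R] (M : Type u) [AddCommGroup M]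
    [Module R M] : Prop :=
  ∀ (B : ModuleCat.{u} R) (A : Submodule R B), A.FG →
    ∀ f : A →ₗ[R] M, ∃ g : (B : Type u) →ₗ[R] M, ∀ a : A, g a = f a


noncomputable section
open CategoryTheory Limits
namespace SemicoherentAux

variable {R : Type u} [CommRing R]

/-- auxiliary complex: projective resolution starting from a prescribed epi. -/
def ofComplex' {Z P0 : ModuleCat.{u} R} [Projective P0] (π : P0 ⟶ Z) : ChainComplex (ModuleCat.{u} R) ℕ :=
  ChainComplex.mk' P0 (Projective.syzygies π) (Projective.d π)
    (fun f => ⟨_, Projective.d f, (Category.assoc _ _ _).trans ((congrArg (fun g => Projective.π (kernel f) ≫ g) (kernel.condition f)).trans comp_zero)⟩)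

variable {Z P0 : ModuleCat.{u} R} [Projective P0] (π : P0 ⟶ Z) [Epi π]

lemma ofComplex'_d_1_0 :
    (ofComplex' π).d 1 0 = Projective.d π := by
  simp [ofComplex']

lemma ofComplex'_exactAt_succ (n : ℕ) :
    (ofComplex' π).ExactAt (n + 1) := by
  rw [HomologicalComplex.exactAt_iff' _ (n + 1 + 1) (n + 1) n (by simp) (by simp)]
  refine (ShortComplex.exact_iff_of_iso ?_).1 (CategoryTheory.exact_d_f ((ofComplex' π).d (n + 1) n))
  exact ShortComplex.isoMk (ChainComplex.mk'XIso P0 (Projective.syzygies π) (Projective.d π) (fun f => ⟨_, Projective.d f, (Category.assoc _ _ _).trans ((congrArg (fun g => Projective.π (kernel f) ≫ g) (kernel.condition f)).trans comp_zero)⟩) n).symm (Iso.refl _) (Iso.refl _)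
    (((Iso.inv_comp_eq _).2 (ChainComplex.mk'_d _ _ _ _ n)).trans (Category.comp_id _).symm)
    ((Category.id_comp _).trans (Category.comp_id _).symm)

instance ofComplex'_projective (n : ℕ) : Projective ((ofComplex' π).X n) := by
  obtain (_ | _ | _ | n) := n
  · exact ‹Projective P0›
  all_goals apply Projective.projective_over

/-- A projective resolution with prescribed bottom epi. -/
def resolutionOfEpi : ProjectiveResolution Z where
  complex := ofComplex' π
  π := (ChainComplex.toSingle₀Equiv _ _).symm ⟨π, by
          rw [ofComplex'_d_1_0]; exact (Category.assoc _ _ _).trans ((congrArg (fun g => Projective.π (kernel π) ≫ g) (kernel.condition π)).trans comp_zero)⟩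
  quasiIso := ⟨fun n => by
    cases n
    · rw [ChainComplex.quasiIsoAt₀_iff, ShortComplex.quasiIso_iff_of_zeros']
      · refine (ShortComplex.exact_and_epi_g_iff_of_iso ?_).2
          ⟨CategoryTheory.exact_d_f π, ‹Epi π›⟩
        exact ShortComplex.isoMk (Iso.refl _) (Iso.refl _) (Iso.refl _)
          (by simp [ofComplex']; rfl) (by simp; rfl)
      all_goals rfl
    · rw [quasiIsoAt_iff_exactAt']
      · apply ofComplex'_exactAt_succ
      · apply ChainComplex.exactAt_succ_single_obj⟩

end SemicoherentAux

namespace SemicoherentAux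
set_option linter.unusedSectionVars false
variable {R : Type u} [CommRing R]

/-- From FP-injectivity: extension property for maps from f.g. submodules of finite frees. -/
lemma extend_of_fpInjective (hself : IsFPInjective R R) {n : ℕ}
    (K : Submodule R (Fin n → R)) (hK : K.FG) (φ : K →ₗ[R] R) :
    ∃ ψ : (Fin n → R) →ₗ[R] R, ∀ x : K, ψ x = φ x := by
  haveI hfp : Module.FinitePresentation R ((Fin n → R) ⧸ K) :=
    Module.finitePresentation_of_surjective K.mkQ K.mkQ_surjective (by rwa [Submodule.ker_mkQ])
  set Z : ModuleCat.{u} R := ModuleCat.of R ((Fin n → R) ⧸ K)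
  set P0 : ModuleCat.{u} R := ModuleCat.of R (Fin n → R)
  haveI : Projective P0 :=
    ModuleCat.projective_of_free (Pi.basisFun R (Fin n))
  let π : P0 ⟶ Z := ModuleCat.ofHom K.mkQ
  haveI : Epi π := (ModuleCat.epi_iff_surjective π).mpr K.mkQ_surjective
  let P : ProjectiveResolution Z := resolutionOfEpi π
  have hsub : Subsingleton (((Ext R (ModuleCat.{u} R) 1).obj (Opposite.op Z)).obj
      (ModuleCat.of R R)) := hself Z hfp
  -- transfer subsingleton along isoExt
  have hiso := P.isoExt (R := R) 1 (ModuleCat.of R R)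
  set C := P.complex.linearYonedaObj R (ModuleCat.of R R) with hC
  have hsub2 : Subsingleton (C.homology 1) := by
    have e := ((forget (ModuleCat R)).mapIso hiso).toEquiv
    exact e.symm.subsingleton
  have hzero : IsZero (C.homology 1) := ModuleCat.isZero_of_subsingleton _
  have hexact : C.ExactAt 1 := (HomologicalComplex.exactAt_iff_isZero_homology _ _).mpr hzero
  rw [HomologicalComplex.exactAt_iff' _ 0 1 2 (by simp) (by simp)] at hexact
  rw [ShortComplex.moduleCat_exact_iff] at hexact
  have hexact' : ∀ (g : (ofComplex' π).X 1 ⟶ ModuleCat.of R R), (ofComplex' π).d 2 1 ≫ g = 0 →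
      ∃ f₀ : (ofComplex' π).X 0 ⟶ ModuleCat.of R R, (ofComplex' π).d 1 0 ≫ f₀ = g := by
    intro g hg
    obtain ⟨f₀, hf₀⟩ := hexact g hg
    exact ⟨f₀, hf₀⟩
  -- the boundary map lands in K
  have hmem : ∀ x : (ofComplex' π).X 1, ((ofComplex' π).d 1 0) x ∈ K := by
    intro x
    rw [ofComplex'_d_1_0 π]
    have hcomp : Projective.d π ≫ π = 0 := by
      exact (Category.assoc _ _ _).trans ((congrArg (fun g => Projective.π (kernel π) ≫ g) (kernel.condition π)).trans comp_zero)
    have h0 : π ((Projective.d π) x) = 0 := by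
      rw [show π ((Projective.d π) x) = (Projective.d π ≫ π) x from rfl, hcomp]; rfl
    exact (Submodule.Quotient.mk_eq_zero K).mp h0
  let g₀ : (ofComplex' π).X 1 ⟶ ModuleCat.of R R :=
    ModuleCat.ofHom (φ.comp (LinearMap.codRestrict K ((ofComplex' π).d 1 0).hom hmem))
  have hg : (ofComplex' π).d 2 1 ≫ g₀ = 0 := by
    apply ModuleCat.hom_ext; apply LinearMap.ext
    intro x
    show g₀ (((ofComplex' π).d 2 1) x) = 0
    have hdd : ((ofComplex' π).d 1 0) (((ofComplex' π).d 2 1) x) = 0 := by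
      rw [show ((ofComplex' π).d 1 0) (((ofComplex' π).d 2 1) x)
          = ((ofComplex' π).d 2 1 ≫ (ofComplex' π).d 1 0) x from rfl,
        HomologicalComplex.d_comp_d]; rfl
    show φ (LinearMap.codRestrict K ((ofComplex' π).d 1 0).hom hmem (((ofComplex' π).d 2 1) x)) = 0
    have : (LinearMap.codRestrict K ((ofComplex' π).d 1 0).hom hmem (((ofComplex' π).d 2 1) x)) = 0 := by
      apply Subtype.ext; exact hdd
    rw [this, map_zero]
  obtain ⟨f, hf⟩ := hexact' g₀ hg
  have hf' : ∀ x : (ofComplex' π).X 1, f (((ofComplex' π).d 1 0) x) = g₀ x := by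
    intro x
    rw [show f (((ofComplex' π).d 1 0) x) = ((ofComplex' π).d 1 0 ≫ f) x from rfl, hf]
  refine ⟨f.hom, fun x => ?_⟩
  obtain ⟨y, hy⟩ : ∃ y : (kernel π : ModuleCat R), (kernel.ι π) y = (x : Fin n → R) := by
    have hx0 : π (x : Fin n → R) = 0 := by
      rw [show π (x : Fin n → R) = Submodule.Quotient.mk (x : Fin n → R) from rfl]
      exact (Submodule.Quotient.mk_eq_zero K).mpr x.2
    refine ⟨(ModuleCat.kernelIsoKer π).inv ⟨(x : Fin n → R), hx0⟩, ?_⟩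
    have h2 : ((ModuleCat.kernelIsoKer π).inv ≫ kernel.ι π) ⟨(x : Fin n → R), hx0⟩
        = (LinearMap.ker π.hom).subtype ⟨(x : Fin n → R), hx0⟩ := by
      rw [ModuleCat.kernelIsoKer_inv_kernel_ι]
      rfl
    exact h2
  obtain ⟨w, hw⟩ : ∃ w : (ofComplex' π).X 1, (Projective.π (kernel π)) w = y :=
    (ModuleCat.epi_iff_surjective (Projective.π (kernel π))).mp inferInstance y
  have hδw : ((ofComplex' π).d 1 0) w = (x : Fin n → R) := by
    rw [ofComplex'_d_1_0 π]
    show (Projective.π (kernel π) ≫ kernel.ι π) w = _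
    rw [show (Projective.π (kernel π) ≫ kernel.ι π) w
        = (kernel.ι π) ((Projective.π (kernel π)) w) from rfl, hw, hy]
  have hfw := hf' w
  rw [hδw] at hfw
  refine hfw.trans ?_
  show φ (LinearMap.codRestrict K ((ofComplex' π).d 1 0).hom hmem w) = φ x
  congr 1
  apply Subtype.ext
  exact hδw

end SemicoherentAux

namespace SemicoherentAux
variable {R : Type u} [CommRing R]

set_option maxHeartbeats 1000000 in
set_option synthInstance.maxHeartbeats 200000 in
lemma fg_submodule_fp (hcoh : IsCoherentRing R) :
    ∀ (n : ℕ) (N : Submodule R (Fin n → R)), N.FG → Module.FinitePresentation R N := by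
  intro n
  induction n with
  | zero =>
    intro N hN
    haveI : Subsingleton ↥N := ⟨fun a b => Subtype.ext (Subsingleton.elim _ _)⟩
    exact Module.finitePresentation_of_surjective (0 : (Fin 0 → R) →ₗ[R] N)
      (fun y => ⟨0, Subsingleton.elim _ _⟩)
      (by rw [← Submodule.fg_top]; exact Module.Finite.fg_top)
  | succ n ih =>
    intro N hN
    haveI : Module.Finite R N := Module.Finite.iff_fg.mpr hN
    let g : N →ₗ[R] R := (LinearMap.proj (Fin.last n)).comp N.subtype
    let I : Ideal R := LinearMap.range g
    haveI : Module.Finite R I := Module.Finite.range g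
    have hI : I.FG := Module.Finite.iff_fg.mp inferInstance
    haveI hIfp : Module.FinitePresentation R I := hcoh I hI
    let g' : N →ₗ[R] I := g.rangeRestrict
    have hg' : Function.Surjective g' := LinearMap.surjective_rangeRestrict g
    have hker : (LinearMap.ker g').FG := Module.FinitePresentation.fg_ker g' hg'
    haveI : Module.Finite R (LinearMap.ker g') := Module.Finite.iff_fg.mpr hker
    let h : (LinearMap.ker g') →ₗ[R] (Fin n → R) :=
      (LinearMap.funLeft R R Fin.castSucc).comp (N.subtype.comp (LinearMap.ker g').subtype)
    have hinj : Function.Injective h := by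
      intro a b hab
      apply Subtype.ext; apply Subtype.ext
      funext i
      refine Fin.lastCases ?_ (fun j => ?_) i
      · have ha : ((a : N) : Fin (n+1) → R) (Fin.last n) = ((b : N) : Fin (n+1) → R) (Fin.last n) := by
          have h1 : g (a : N) = 0 := congrArg Subtype.val (LinearMap.mem_ker.mp a.2)
          have h2 : g (b : N) = 0 := congrArg Subtype.val (LinearMap.mem_ker.mp b.2)
          have ha' : ((a : N) : Fin (n+1) → R) (Fin.last n) = 0 := h1
          have hb' : ((b : N) : Fin (n+1) → R) (Fin.last n) = 0 := h2
          rw [ha', hb']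
        exact ha
      · exact congrFun hab j
    haveI : Module.Finite R (LinearMap.range h) := Module.Finite.range h
    have hrfg : (LinearMap.range h).FG := Module.Finite.iff_fg.mp inferInstance
    haveI : Module.FinitePresentation R (LinearMap.range h) := ih _ hrfg
    let e : (LinearMap.ker g') ≃ₗ[R] LinearMap.range h := LinearEquiv.ofInjective h hinj
    haveI : Module.FinitePresentation R (LinearMap.ker g') :=
      Module.finitePresentation_of_surjective (R := R) (M := LinearMap.range h) (N := LinearMap.ker g') e.symm.toLinearMap e.symm.surjective
        (by rw [show LinearMap.ker e.symm.toLinearMap = ⊥ from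
            LinearMap.ker_eq_bot_of_injective e.symm.injective]; exact Submodule.fg_bot)
    exact Module.finitePresentation_of_ker g' hg'

lemma fg_ker_of_coherent (hcoh : IsCoherentRing R) {n m : ℕ}
    (f : (Fin n → R) →ₗ[R] (Fin m → R)) : (LinearMap.ker f).FG := by
  haveI : Module.Finite R (LinearMap.range f) := Module.Finite.range f
  haveI : Module.FinitePresentation R (LinearMap.range f) :=
    fg_submodule_fp hcoh m _ (Module.Finite.iff_fg.mp inferInstance)
  have := Module.FinitePresentation.fg_ker f.rangeRestrict (LinearMap.surjective_rangeRestrict f)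
  rwa [LinearMap.ker_rangeRestrict] at this

end SemicoherentAux

namespace SemicoherentAux
variable {R : Type u} [CommRing R]

/-- dot product as a linear map in the second variable -/
def dotL {q : ℕ} (a : Fin q → R) : (Fin q → R) →ₗ[R] R :=
  ∑ i, a i • LinearMap.proj i

lemma dotL_apply {q : ℕ} (a w : Fin q → R) : dotL a w = ∑ i, a i * w i := by
  simp [dotL, LinearMap.sum_apply]

lemma dotL_comm {q : ℕ} (a w : Fin q → R) : dotL a w = dotL w a := by
  simp [dotL_apply, mul_comm]

lemma dotL_single {q : ℕ} (a : Fin q → R) (i : Fin q) : dotL a (Pi.single i 1) = a i := by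
  simp [dotL_apply, Pi.single_apply, mul_comm]

lemma embed_quotient (hself : IsFPInjective R R) (hcoh : IsCoherentRing R) {n : ℕ}
    (K : Submodule R (Fin n → R)) (hK : K.FG) :
    ∃ (k : ℕ) (e : ((Fin n → R) ⧸ K) →ₗ[R] (Fin k → R)), Function.Injective e := by
  classical
  obtain ⟨m, v, hv⟩ := Submodule.fg_iff_exists_fin_generating_family.mp hK
  let A : (Fin n → R) →ₗ[R] (Fin m → R) := LinearMap.pi (fun j => dotL (v j))
  obtain ⟨k, c, hc⟩ := Submodule.fg_iff_exists_fin_generating_family.mp (fg_ker_of_coherent hcoh A)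
  have hcmem : ∀ l, A (c l) = 0 := fun l => by
    have : c l ∈ LinearMap.ker A := by
      rw [← hc]; exact Submodule.subset_span ⟨l, rfl⟩
    exact LinearMap.mem_ker.mp this
  have hvmem : ∀ j, v j ∈ K := fun j => by
    rw [← hv]; exact Submodule.subset_span ⟨j, rfl⟩
  let E : (Fin n → R) →ₗ[R] (Fin k → R) := LinearMap.pi (fun l => dotL (c l))
  have hKle : K ≤ LinearMap.ker E := by
    rw [← hv, Submodule.span_le]
    rintro _ ⟨j, rfl⟩
    rw [SetLike.mem_coe, LinearMap.mem_ker]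
    funext l
    have h1 : dotL (v j) (c l) = 0 := congrFun (hcmem l) j
    have : E (v j) l = dotL (c l) (v j) := by simp [E, LinearMap.pi_apply]
    rw [this, dotL_comm, h1]; rfl
  refine ⟨k, K.liftQ E hKle, ?_⟩
  rw [← LinearMap.ker_eq_bot, Submodule.ker_liftQ]
  have hEK : LinearMap.ker E ≤ K := by
    intro u hu
    have hu' : ∀ l, dotL (c l) u = 0 := fun l => by
      have := congrFun (LinearMap.mem_ker.mp hu) l
      simpa [E, LinearMap.pi_apply] using this
    -- ker A ≤ ker (dotL u)
    have hSle : LinearMap.ker A ≤ LinearMap.ker (dotL u) := by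
      rw [← hc, Submodule.span_le]
      rintro _ ⟨l, rfl⟩
      rw [SetLike.mem_coe, LinearMap.mem_ker, dotL_comm]
      exact hu' l
    -- factor dotL u through range A
    let φ : (LinearMap.range A) →ₗ[R] R :=
      ((LinearMap.ker A).liftQ (dotL u) hSle).comp (LinearMap.quotKerEquivRange A).symm.toLinearMap
    have hφ : ∀ w : Fin n → R, φ ⟨A w, LinearMap.mem_range_self A w⟩ = dotL u w := by
      intro w
      have h1 : (LinearMap.quotKerEquivRange A) (Submodule.Quotient.mk w)
          = ⟨A w, LinearMap.mem_range_self A w⟩ := by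
        apply Subtype.ext
        simp [LinearMap.quotKerEquivRange_apply_mk]
      have h2 : (LinearMap.quotKerEquivRange A).symm ⟨A w, LinearMap.mem_range_self A w⟩
          = Submodule.Quotient.mk w := by
        rw [← h1, LinearEquiv.symm_apply_apply]
      show ((LinearMap.ker A).liftQ (dotL u) hSle)
        ((LinearMap.quotKerEquivRange A).symm ⟨A w, LinearMap.mem_range_self A w⟩) = dotL u w
      rw [h2]
      exact Submodule.liftQ_apply _ _ _
    -- extend φ to all of Fin m → R
    haveI : Module.Finite R (LinearMap.range A) := Module.Finite.range A
    obtain ⟨ψ, hψ⟩ := extend_of_fpInjective hself (LinearMap.range A)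
      (Module.Finite.iff_fg.mp inferInstance) φ
    -- now u = ∑ j, ψ (Pi.single j 1) • v j
    have hui : ∀ i, u i = ∑ j, ψ (Pi.single j 1) * v j i := by
      intro i
      have e1 : u i = dotL u (Pi.single i 1) := (dotL_single u i).symm
      have e2 : dotL u (Pi.single i 1) = ψ (A (Pi.single i 1)) := by
        rw [← hφ (Pi.single i 1), hψ ⟨A (Pi.single i 1), LinearMap.mem_range_self A _⟩]
      have e3 : A (Pi.single i 1) = ∑ j, (v j i) • (Pi.single j 1 : Fin m → R) := by
        funext j
        have : A (Pi.single i 1) j = v j i := by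
          simp [A, LinearMap.pi_apply, dotL_single]
        rw [this]
        rw [Finset.sum_apply]
        simp [Pi.single_apply]
      rw [e1, e2, e3, map_sum]
      congr 1
      funext j
      rw [map_smul, smul_eq_mul, mul_comm]
    have : u = ∑ j, ψ (Pi.single j 1) • v j := by
      funext i
      rw [Finset.sum_apply]
      simpa using hui i
    rw [this]
    exact Submodule.sum_mem K (fun j _ => Submodule.smul_mem K _ (hvmem j))
  rw [eq_bot_iff]
  rintro x hx
  obtain ⟨y, hy, rfl⟩ := Submodule.mem_map.mp hx
  have : K.mkQ y = 0 := by
    rw [show K.mkQ y = Submodule.Quotient.mk y from rfl]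
    exact (Submodule.Quotient.mk_eq_zero K).mpr (hEK hy)
  rw [this]
  exact Submodule.zero_mem ⊥

end SemicoherentAux

namespace SemicoherentAux
variable {R : Type u} [CommRing R]

lemma injective_pi {ι : Type u} (F : Type u) [AddCommGroup F] [Module R F]
    (hF : Module.Injective R F) : Module.Injective R (ι → F) := by
  constructor
  intro X Y _ _ _ _ f hf g
  choose h hh using fun (e : ι) => hF.out f hf ((LinearMap.proj e).comp g)
  exact ⟨LinearMap.pi h, fun x => funext fun e => hh e x⟩

lemma flat_of_injective (hself : IsFPInjective R R) (hcoh : IsCoherentRing R)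
    (M : Type u) [AddCommGroup M] [Module R M]
    (hM : Module.Injective R M) : Module.Flat R M := by
  apply Module.Flat.of_forall_exists_factorization
  intro l f x hxf
  classical
  set n := Fintype.card (Fin l) with hn
  let ε : (Fin l →₀ R) ≃ₗ[R] (Fin n → R) :=
    (Finsupp.linearEquivFunOnFinite R R (Fin l)).trans
      (LinearEquiv.funCongrLeft R R (Fintype.equivFin (Fin l)).symm)
  let K : Submodule R (Fin l →₀ R) := Submodule.span R {f}
  let K' : Submodule R (Fin n → R) := Submodule.map (ε : (Fin l →₀ R) →ₗ[R] (Fin n → R)) K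
  have hK' : K'.FG := Submodule.FG.map _ ⟨{f}, by simp [K]⟩
  obtain ⟨k, e, he⟩ := embed_quotient hself hcoh K' hK'
  let qe : ((Fin l →₀ R) ⧸ K) ≃ₗ[R] ((Fin n → R) ⧸ K') :=
    Submodule.Quotient.equiv K K' ε rfl
  have hxK : K ≤ LinearMap.ker x := by
    rw [Submodule.span_le, Set.singleton_subset_iff]
    exact LinearMap.mem_ker.mpr hxf
  let xbar : ((Fin l →₀ R) ⧸ K) →ₗ[R] M := K.liftQ x hxK
  let ebig : ((Fin l →₀ R) ⧸ K) →ₗ[R] (Fin k → R) := e.comp qe.toLinearMap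
  have hebig : Function.Injective ebig := he.comp qe.injective
  obtain ⟨h, hh⟩ := hM.out ebig hebig xbar
  let fe : (Fin k →₀ R) ≃ₗ[R] (Fin k → R) :=
    Finsupp.linearEquivFunOnFinite R R (Fin k)
  refine ⟨k, fe.symm.toLinearMap ∘ₗ ebig ∘ₗ K.mkQ,
    h ∘ₗ fe.toLinearMap, ?_, ?_⟩
  · apply LinearMap.ext
    intro w
    show x w = h (fe (fe.symm (ebig (K.mkQ w))))
    rw [LinearEquiv.apply_symm_apply, hh (K.mkQ w)]
    show x w = K.liftQ x hxK (Submodule.Quotient.mk w)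
    rw [Submodule.liftQ_apply]
  · show fe.symm (ebig (K.mkQ f)) = 0
    have : K.mkQ f = 0 := by
      rw [show K.mkQ f = Submodule.Quotient.mk f from rfl]
      exact (Submodule.Quotient.mk_eq_zero K).mpr (Submodule.subset_span rfl)
    rw [this, map_zero, map_zero]

end SemicoherentAux


open SemicoherentAux in
/-- Let `R` be a commutative self FP-injective ring. If `R` is coherent,
then `R` is semicoherent. -/
theorem coherent_implies_semicoherent_of_selfFPInjective (R : Type u) [CommRing R]
    (hself : IsFPInjective R R) (hcoh : IsCoherentRing R) :
    IsSemicoherentRing R := by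
  intro E F hE hF
  refine ⟨ModuleCat.of R (E.carrier → F.carrier),
    LinearMap.pi (fun x => LinearMap.applyₗ x), ?_, ?_⟩
  · exact flat_of_injective hself hcoh _ (injective_pi F.carrier hF)
  · intro f g h
    apply LinearMap.ext
    intro x
    have := congrFun h x
    simpa [LinearMap.pi_apply] using this
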